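/- For all Hermitian matrices Z and W' indexed by (Fin d_a) × J_k, one has ‖A(Z)‖² + ‖T(Z) − W'‖² ≤ ((d_k + 2d)/d) · (‖Z‖² + ‖W'‖²) (the smoothness bound used for the projected-gradient method on the PST least-squares problem). -/

import Mathlib

open Matrix
open scoped Kronecker ComplexOrder

noncomputable section

instance monoDecidable {k d : ℕ} : DecidablePred (Monotone : (Fin k → Fin d) → Prop) :=
  fun f => decidable_of_iff (∀ a b : Fin k, a ≤ b → f a ≤ f b) Iff.rfl

/-- `Jk d k` : nondecreasing sequences of length `k` from `{0, …, d-1}`. -/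
abbrev Jk (d k : ℕ) := {f : Fin k → Fin d // Monotone f}

/-- the nondecreasing rearrangement of a sequence. -/
def sortTuple {d k : ℕ} (i : Fin k → Fin d) : Jk d k :=
  ⟨i ∘ Tuple.sort i, Tuple.monotone_sort i⟩

/-- `permCount j` : the number of sequences whose sorted rearrangement is `j`. -/
def permCount {d k : ℕ} (j : Jk d k) : ℕ :=
  (Finset.univ.filter fun i : Fin k → Fin d => sortTuple i = j).card

/-- The scaled partition matrix `P`. -/
def Pmat (d k : ℕ) : Matrix (Fin k → Fin d) (Jk d k) ℂ :=
  fun i j => if sortTuple i = j then (((permCount j : ℝ) ^ (-(1/2) : ℝ) : ℝ) : ℂ) else 0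

/-- `cons0 b r` is the sequence `b⌢r` sending `0` to `b` and `s+1` to `r s`. -/
def cons0 {d k : ℕ} (b : Fin d) (r : Fin (k - 1) → Fin d) : Fin k → Fin d :=
  fun s => if h : (s : ℕ) = 0 then b else r ⟨(s : ℕ) - 1, by have := s.isLt; omega⟩

/-- Partial trace over the last `k - 1` factors. -/
def PTr (da d k : ℕ)
    (M : Matrix (Fin da × (Fin k → Fin d)) (Fin da × (Fin k → Fin d)) ℂ) :
    Matrix (Fin da × Fin d) (Fin da × Fin d) ℂ :=
  fun p q => ∑ r : Fin (k - 1) → Fin d, M (p.1, cons0 p.2 r) (q.1, cons0 q.2 r)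

/-- The operator `A`. -/
def Amap (da d k : ℕ) (X : Matrix (Fin da × Jk d k) (Fin da × Jk d k) ℂ) :
    Matrix (Fin da × Fin d) (Fin da × Fin d) ℂ :=
  PTr da d k (((1 : Matrix (Fin da) (Fin da) ℂ) ⊗ₖ Pmat d k) * X *
    ((1 : Matrix (Fin da) (Fin da) ℂ) ⊗ₖ Pmat d k)ᴴ)

/-- The extension operator `E` : `E(W) ((a,i),(a',i')) = W ((a, i 0), (a', i' 0))` when
`i` and `i'` agree on all later coordinates, and `0` otherwise. -/
def Emat (da d k : ℕ) (hk : 0 < k)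
    (W : Matrix (Fin da × Fin d) (Fin da × Fin d) ℂ) :
    Matrix (Fin da × (Fin k → Fin d)) (Fin da × (Fin k → Fin d)) ℂ :=
  fun p q =>
    if ∀ s : Fin (k - 1),
        p.2 ⟨(s : ℕ) + 1, by have := s.isLt; omega⟩ =
          q.2 ⟨(s : ℕ) + 1, by have := s.isLt; omega⟩
    then W (p.1, p.2 ⟨0, hk⟩) (q.1, q.2 ⟨0, hk⟩) else 0

/-- The adjoint operator `A†`. -/
def Adag (da d k : ℕ) (hk : 0 < k)
    (W : Matrix (Fin da × Fin d) (Fin da × Fin d) ℂ) :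
    Matrix (Fin da × Jk d k) (Fin da × Jk d k) ℂ :=
  ((1 : Matrix (Fin da) (Fin da) ℂ) ⊗ₖ Pmat d k)ᴴ * Emat da d k hk W *
    ((1 : Matrix (Fin da) (Fin da) ℂ) ⊗ₖ Pmat d k)

/-- Partial transpose in the second index. -/
def pTransp {m α : Type*} (M : Matrix (m × α) (m × α) ℂ) : Matrix (m × α) (m × α) ℂ :=
  fun p q => M (p.1, q.2) (q.1, p.2)

/-- Squared Frobenius norm. -/
def frobSq {α β : Type*} [Fintype α] [Fintype β] (M : Matrix α β ℂ) : ℝ :=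
  ∑ p, ∑ q, ‖M p q‖ ^ 2

/-- Largest eigenvalue of a Hermitian matrix. -/
def lamMax {n : Type*} [Fintype n] [DecidableEq n]
    {M : Matrix n n ℂ} (hM : M.IsHermitian) : ℝ :=
  ⨆ i, hM.eigenvalues i

end

/-! ### Auxiliary combinatorial lemmas -/

noncomputable section Aux

theorem sortTuple_eq_iff {d k : ℕ} {i i' : Fin k → Fin d} :
    sortTuple i = sortTuple i' ↔ ∃ σ : Equiv.Perm (Fin k), i' = i ∘ σ := by
  constructor
  · intro h
    refine ⟨(Tuple.sort i').symm.trans (Tuple.sort i), ?_⟩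
    have hv : i ∘ Tuple.sort i = i' ∘ Tuple.sort i' := congrArg Subtype.val h
    funext s
    have := congrFun hv ((Tuple.sort i').symm s)
    simpa using this.symm
  · rintro ⟨σ, rfl⟩
    exact (Subtype.ext (Tuple.comp_perm_comp_sort_eq_comp_sort)).symm

theorem sortTuple_comp_perm {d k : ℕ} (i : Fin k → Fin d) (σ : Equiv.Perm (Fin k)) :
    sortTuple (i ∘ σ) = sortTuple i :=
  (sortTuple_eq_iff.mpr ⟨σ, rfl⟩).symm

/-- multiset of values of a tuple -/
def tupMS {d k : ℕ} (i : Fin k → Fin d) : Multiset (Fin d) := (List.ofFn i : List (Fin d))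

theorem tupMS_comp_perm {d k : ℕ} (i : Fin k → Fin d) (σ : Equiv.Perm (Fin k)) :
    tupMS (i ∘ σ) = tupMS i :=
  Quot.sound (σ.ofFn_comp_perm i)

theorem tupMS_eq_of_sortTuple_eq {d k : ℕ} {i i' : Fin k → Fin d}
    (h : sortTuple i = sortTuple i') : tupMS i = tupMS i' := by
  obtain ⟨σ, rfl⟩ := sortTuple_eq_iff.mp h
  exact (tupMS_comp_perm i σ).symm

theorem permCount_sortTuple_comp {d k : ℕ} (π : Equiv.Perm (Fin d)) (i : Fin k → Fin d) :
    permCount (sortTuple (π ∘ i)) = permCount (sortTuple i) := by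
  unfold permCount
  apply Finset.card_bij' (fun i' _ => π.symm ∘ i') (fun i' _ => π ∘ i')
  · intro i' hi'
    simp only [Finset.mem_filter, Finset.mem_univ, true_and] at hi' ⊢
    obtain ⟨σ, hσ⟩ := sortTuple_eq_iff.mp hi'.symm
    rw [show π.symm ∘ i' = i ∘ σ from by funext s; simp [congrFun hσ s]]
    exact sortTuple_comp_perm i σ
  · intro i' hi'
    simp only [Finset.mem_filter, Finset.mem_univ, true_and] at hi' ⊢
    obtain ⟨σ, hσ⟩ := sortTuple_eq_iff.mp hi'.symm
    rw [show π ∘ i' = (π ∘ i) ∘ σ from by funext s; simp [congrFun hσ s]]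
    exact sortTuple_comp_perm (π ∘ i) σ
  · intro i' _; funext s; simp
  · intro i' _; funext s; simp

theorem sortTuple_val {d k : ℕ} (j : Jk d k) : sortTuple j.val = j := by
  have : Tuple.sort j.val = Equiv.refl _ := Tuple.sort_eq_refl_iff_monotone.mpr j.2
  apply Subtype.ext
  simp [sortTuple, this]

theorem permCount_pos {d k : ℕ} (j : Jk d k) : 0 < permCount j := by
  refine Finset.card_pos.mpr ⟨j.val, ?_⟩
  simp [permCount, sortTuple_val j]

theorem sum_sortTuple_fiberwise {d k : ℕ} (F : Jk d k → ℝ) :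
    ∑ i : Fin k → Fin d, F (sortTuple i) = ∑ j : Jk d k, (permCount j : ℝ) * F j := by
  rw [← Finset.sum_fiberwise Finset.univ (fun i => sortTuple i) (fun i => F (sortTuple i))]
  refine Finset.sum_congr rfl fun j _ => ?_
  rw [Finset.sum_congr rfl (fun i hi => by
    simp only [Finset.mem_filter] at hi; rw [hi.2]),
    Finset.sum_const, nsmul_eq_mul]
  rfl

/-- The cons0 equivalence. -/
def consEquiv (d k : ℕ) (hk : 0 < k) : (Fin d × (Fin (k - 1) → Fin d)) ≃ (Fin k → Fin d) where
  toFun p := cons0 p.1 p.2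
  invFun i := (i ⟨0, hk⟩, fun s => i ⟨(s : ℕ) + 1, by have := s.isLt; omega⟩)
  left_inv := by
    rintro ⟨b, r⟩
    refine Prod.ext ?_ ?_
    · simp [cons0]
    · funext s; simp only [cons0]
      rw [dif_neg (by omega)]
      congr 1
  right_inv := by
    intro i; funext s
    simp only [cons0]
    by_cases h : (s : ℕ) = 0
    · rw [dif_pos h]; congr 1; exact Fin.ext h.symm
    · rw [dif_neg h]; congr 1; exact Fin.ext (by simp; omega)

theorem tupMS_cons0 {d k : ℕ} (hk : 0 < k) (b : Fin d) (r : Fin (k - 1) → Fin d) :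
    tupMS (cons0 b r) = b ::ₘ tupMS r := by
  obtain ⟨m, rfl⟩ : ∃ m, k = m + 1 := ⟨k - 1, by omega⟩
  show ((List.ofFn (cons0 b r) : List (Fin d)) : Multiset (Fin d)) = _
  rw [List.ofFn_succ]
  have h0 : cons0 b r 0 = b := by simp [cons0]
  have hs : (fun i : Fin m => cons0 b r i.succ) = r := by
    funext i; simp only [cons0]
    rw [dif_neg (by simp)]
    congr 1
  rw [h0, hs]
  rfl

theorem comp_cons0 {d k : ℕ} (π : Fin d → Fin d) (b : Fin d) (r : Fin (k - 1) → Fin d) :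
    π ∘ cons0 b r = cons0 (π b) (π ∘ r) := by
  funext s
  simp only [Function.comp, cons0]
  by_cases h : (s : ℕ) = 0 <;> simp [h]

theorem card_Jk (d k : ℕ) : Fintype.card (Jk d k) = Nat.choose (d + k - 1) k := by
  have e : Jk d k ≃ Sym (Fin d) k := by
    refine Equiv.ofBijective (fun j => ⟨tupMS j.val, by simp [tupMS]⟩) ⟨?_, ?_⟩
    · rintro ⟨j, hj⟩ ⟨j', hj'⟩ h
      have hperm : (List.ofFn j).Perm (List.ofFn j') :=
        Multiset.coe_eq_coe.mp (congrArg Subtype.val h)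
      have heq : List.ofFn j = List.ofFn j' :=
        List.Perm.eq_of_sortedLE
          (List.sortedLE_ofFn_iff.mpr hj) (List.sortedLE_ofFn_iff.mpr hj') hperm
      exact Subtype.ext (List.ofFn_injective heq)
    · rintro ⟨s, hs⟩
      obtain ⟨l, rfl⟩ := Quot.exists_rep s
      have hl : l.length = k := hs
      refine ⟨sortTuple (fun t => l.get (Fin.cast hl.symm t)), Subtype.ext ?_⟩
      show tupMS ((fun t => l.get (Fin.cast hl.symm t)) ∘ Tuple.sort _) = (l : Multiset (Fin d))
      rw [tupMS_comp_perm]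
      show ((List.ofFn _ : List (Fin d)) : Multiset (Fin d)) = _
      congr 1
      exact List.ext_get (by simp [hl]) (by intro n h1 h2; simp)
  rw [Fintype.card_congr e, Sym.card_sym_eq_multichoose, Fintype.card_fin, Nat.multichoose_eq]

end Aux

noncomputable section Aux2

theorem sum_sortTuple_fiberwise' {d k : ℕ} (hk : 0 < k) (F : Jk d k → ℝ) :
    ∑ b : Fin d, ∑ r : Fin (k - 1) → Fin d, F (sortTuple (cons0 b r)) =
      ∑ j : Jk d k, (permCount j : ℝ) * F j := by
  rw [← sum_sortTuple_fiberwise F, ← Equiv.sum_comp (consEquiv d k hk)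
    (fun i => F (sortTuple i)), Fintype.sum_prod_type]
  rfl

theorem resum {d k : ℕ} (hk : 0 < k) (g : Jk d k → ℝ) :
    ∑ b : Fin d, ∑ r : Fin (k - 1) → Fin d,
        ((permCount (sortTuple (cons0 b r)) : ℝ))⁻¹ * g (sortTuple (cons0 b r)) =
      ∑ j : Jk d k, g j := by
  rw [sum_sortTuple_fiberwise' hk (fun j => ((permCount j : ℝ))⁻¹ * g j)]
  refine Finset.sum_congr rfl fun j _ => ?_
  rw [← mul_assoc, mul_inv_cancel₀ (by exact_mod_cast (permCount_pos j).ne'), one_mul]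

theorem sum_inv_perm_indep {d k : ℕ} (b b' : Fin d) :
    ∑ r : Fin (k - 1) → Fin d, ((permCount (sortTuple (cons0 b r)) : ℝ))⁻¹ =
      ∑ r : Fin (k - 1) → Fin d, ((permCount (sortTuple (cons0 b' r)) : ℝ))⁻¹ := by
  set π : Equiv.Perm (Fin d) := Equiv.swap b b'
  refine Fintype.sum_equiv (Equiv.piCongrRight fun _ => π) _ _ fun r => ?_
  show _ = ((permCount (sortTuple (cons0 b' (π ∘ r))) : ℝ))⁻¹
  have h1 : cons0 b' (π ∘ r) = π ∘ cons0 b r := by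
    rw [comp_cons0, Equiv.swap_apply_left]
  rw [h1, permCount_sortTuple_comp]

theorem sum_inv_perm {d k : ℕ} (hk : 0 < k) (hd : 0 < d) (b : Fin d) :
    ∑ r : Fin (k - 1) → Fin d, ((permCount (sortTuple (cons0 b r)) : ℝ))⁻¹ =
      (Nat.choose (d + k - 1) k : ℝ) / d := by
  have hsum : ∑ b' : Fin d, ∑ r : Fin (k - 1) → Fin d,
      ((permCount (sortTuple (cons0 b' r)) : ℝ))⁻¹ = (Nat.choose (d + k - 1) k : ℝ) := by
    rw [sum_sortTuple_fiberwise' hk (fun j => ((permCount j : ℝ))⁻¹)]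
    rw [Finset.sum_congr rfl fun j _ =>
      mul_inv_cancel₀ ((Nat.cast_pos.mpr (permCount_pos j)).ne' : (permCount j : ℝ) ≠ 0)]
    rw [Finset.sum_const, nsmul_eq_mul, mul_one, Finset.card_univ, card_Jk]
  have hconst : ∀ b' : Fin d, (∑ r : Fin (k - 1) → Fin d,
      ((permCount (sortTuple (cons0 b' r)) : ℝ))⁻¹) =
      (∑ r : Fin (k - 1) → Fin d, ((permCount (sortTuple (cons0 b r)) : ℝ))⁻¹) :=
    fun b' => sum_inv_perm_indep b' b
  rw [Finset.sum_congr rfl (fun b' _ => hconst b'), Finset.sum_const, Finset.card_univ,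
    Fintype.card_fin, nsmul_eq_mul] at hsum
  rw [eq_div_iff ((Nat.cast_pos.mpr hd).ne' : (d : ℝ) ≠ 0), mul_comm]
  exact hsum

end Aux2

noncomputable section Aux3

/-- weight -/
def wR {d k : ℕ} (j : Jk d k) : ℝ := (permCount j : ℝ) ^ (-(1/2) : ℝ)

theorem wR_nonneg {d k : ℕ} (j : Jk d k) : 0 ≤ wR j :=
  Real.rpow_nonneg (Nat.cast_nonneg _) _

theorem wR_mul_self {d k : ℕ} (j : Jk d k) : wR j * wR j = ((permCount j : ℝ))⁻¹ := by
  rw [wR, ← Real.rpow_add (Nat.cast_pos.mpr (permCount_pos j))]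
  norm_num
  exact Real.rpow_neg_one _

theorem QZQ_apply {da d k : ℕ} (Z : Matrix (Fin da × Jk d k) (Fin da × Jk d k) ℂ)
    (a a' : Fin da) (i i' : Fin k → Fin d) :
    (((1 : Matrix (Fin da) (Fin da) ℂ) ⊗ₖ Pmat d k) * Z *
      ((1 : Matrix (Fin da) (Fin da) ℂ) ⊗ₖ Pmat d k)ᴴ) (a, i) (a', i') =
    ((wR (sortTuple i) : ℝ) : ℂ) * ((wR (sortTuple i') : ℝ) : ℂ) *
      Z (a, sortTuple i) (a', sortTuple i') := by
  simp only [Matrix.mul_apply, Matrix.conjTranspose_apply, Matrix.kroneckerMap_apply,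
    Matrix.one_apply, Pmat, Fintype.sum_prod_type, ite_mul, mul_ite, one_mul, zero_mul,
    mul_zero, mul_one, apply_ite (star : ℂ → ℂ), star_zero, RCLike.star_def, Complex.conj_ofReal,
    Finset.sum_ite_eq, Finset.sum_ite_eq', Finset.mem_univ, if_true]
  rw [show wR (sortTuple i) = (permCount (sortTuple i) : ℝ) ^ (-(1/2) : ℝ) from rfl,
    show wR (sortTuple i') = (permCount (sortTuple i') : ℝ) ^ (-(1/2) : ℝ) from rfl]
  ring

theorem Amap_apply {da d k : ℕ} (Z : Matrix (Fin da × Jk d k) (Fin da × Jk d k) ℂ)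
    (a a' : Fin da) (b b' : Fin d) :
    Amap da d k Z (a, b) (a', b') =
      ∑ r : Fin (k - 1) → Fin d,
        ((wR (sortTuple (cons0 b r)) : ℝ) : ℂ) * ((wR (sortTuple (cons0 b' r)) : ℝ) : ℂ) *
          Z (a, sortTuple (cons0 b r)) (a', sortTuple (cons0 b' r)) := by
  unfold Amap PTr
  exact Finset.sum_congr rfl fun r _ => QZQ_apply Z a a' _ _

end Aux3

noncomputable section Aux4

theorem entry_sq_le {da d k : ℕ} (hk : 0 < k) (hd : 0 < d)
    (Z : Matrix (Fin da × Jk d k) (Fin da × Jk d k) ℂ)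
    (a a' : Fin da) (b b' : Fin d) :
    ‖Amap da d k Z (a, b) (a', b')‖ ^ 2 ≤
      ((Nat.choose (d + k - 1) k : ℝ) / d) *
        ∑ r : Fin (k - 1) → Fin d,
          ((permCount (sortTuple (cons0 b' r)) : ℝ))⁻¹ *
            ‖Z (a, sortTuple (cons0 b r)) (a', sortTuple (cons0 b' r))‖ ^ 2 := by
  have habs : ‖Amap da d k Z (a, b) (a', b')‖ ≤
      ∑ r : Fin (k - 1) → Fin d,
        wR (sortTuple (cons0 b r)) *
          (wR (sortTuple (cons0 b' r)) *
            ‖Z (a, sortTuple (cons0 b r)) (a', sortTuple (cons0 b' r))‖) := by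
    rw [Amap_apply]
    refine (norm_sum_le _ _).trans_eq (Finset.sum_congr rfl fun r _ => ?_)
    rw [norm_mul, norm_mul,
      Complex.norm_of_nonneg (wR_nonneg _), Complex.norm_of_nonneg (wR_nonneg _), mul_assoc]
  have hsq : ‖Amap da d k Z (a, b) (a', b')‖ ^ 2 ≤
      (∑ r : Fin (k - 1) → Fin d,
        wR (sortTuple (cons0 b r)) *
          (wR (sortTuple (cons0 b' r)) *
            ‖Z (a, sortTuple (cons0 b r)) (a', sortTuple (cons0 b' r))‖)) ^ 2 :=
    pow_le_pow_left₀ (norm_nonneg _) habs 2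
  refine hsq.trans ?_
  refine (Finset.sum_mul_sq_le_sq_mul_sq _ _ _).trans ?_
  have h1 : ∑ r : Fin (k - 1) → Fin d, wR (sortTuple (cons0 b r)) ^ 2 =
      (Nat.choose (d + k - 1) k : ℝ) / d := by
    rw [← sum_inv_perm hk hd b]
    exact Finset.sum_congr rfl fun r _ => by rw [sq, wR_mul_self]
  rw [h1]
  refine mul_le_mul_of_nonneg_left (Finset.sum_le_sum fun r _ => ?_)
    (by positivity)
  rw [mul_pow, sq (wR _), wR_mul_self]

end Aux4

noncomputable section Aux5

theorem sum_comp_inj_le {α β : Type*} [Fintype α] [Fintype β] [DecidableEq β]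
    (e : α → β) (he : Function.Injective e) (f : β → ℝ) (hf : ∀ x, 0 ≤ f x) :
    ∑ a, f (e a) ≤ ∑ b, f b := by
  rw [← Finset.sum_image (fun x _ y _ h => he h)]
  exact Finset.sum_le_sum_of_subset_of_nonneg (Finset.subset_univ _) fun i _ _ => hf i

theorem cons0_sort_inj {d k : ℕ} (hk : 0 < k) (r : Fin (k - 1) → Fin d) :
    Function.Injective (fun b => sortTuple (cons0 b r)) := by
  intro b b' h
  have h2 := tupMS_eq_of_sortTuple_eq h
  rw [tupMS_cons0 hk, tupMS_cons0 hk] at h2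
  by_contra hne
  have := congrArg (Multiset.count b) h2
  rw [Multiset.count_cons_self, Multiset.count_cons_of_ne hne] at this
  omega

theorem frobSq_Amap_le {da d k : ℕ} (hk : 0 < k) (hd : 0 < d)
    (Z : Matrix (Fin da × Jk d k) (Fin da × Jk d k) ℂ) :
    frobSq (Amap da d k Z) ≤ ((Nat.choose (d + k - 1) k : ℝ) / d) * frobSq Z := by
  set C : ℝ := (Nat.choose (d + k - 1) k : ℝ) / d with hC
  have hC0 : 0 ≤ C := by positivity
  -- the inner quantity
  set G : (Fin da × Fin d) → (Fin da × Fin d) → (Fin (k - 1) → Fin d) → ℝ :=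
    fun p q r => ((permCount (sortTuple (cons0 q.2 r)) : ℝ))⁻¹ *
      ‖Z (p.1, sortTuple (cons0 p.2 r)) (q.1, sortTuple (cons0 q.2 r))‖ ^ 2
    with hG
  have step1 : frobSq (Amap da d k Z) ≤ C * ∑ p, ∑ q, ∑ r, G p q r := by
    rw [frobSq, Finset.mul_sum]
    refine Finset.sum_le_sum fun p _ => ?_
    rw [Finset.mul_sum]
    refine Finset.sum_le_sum fun q _ => ?_
    simpa [hG] using entry_sq_le hk hd Z p.1 q.1 p.2 q.2
  have step2 : (∑ p, ∑ q, ∑ r, G p q r) = ∑ q, ∑ r, ∑ p, G p q r := by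
    rw [Finset.sum_comm]
    exact Finset.sum_congr rfl fun q _ => Finset.sum_comm
  have step3 : ∀ q r, (∑ p, G p q r) ≤
      ((permCount (sortTuple (cons0 q.2 r)) : ℝ))⁻¹ *
        ∑ p, ‖Z p (q.1, sortTuple (cons0 q.2 r))‖ ^ 2 := by
    intro q r
    rw [Finset.mul_sum]
    rw [Fintype.sum_prod_type, Fintype.sum_prod_type]
    refine Finset.sum_le_sum fun a _ => ?_
    rw [← Finset.mul_sum, ← Finset.mul_sum]
    refine mul_le_mul_of_nonneg_left ?_ (by positivity)
    exact sum_comp_inj_le _ (cons0_sort_inj hk r)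
      (fun j => ‖Z (a, j) (q.1, sortTuple (cons0 q.2 r))‖ ^ 2)
      (fun j => by positivity)
  have step4 : (∑ q, ∑ r, ∑ p, G p q r) ≤ frobSq Z := by
    refine le_trans (Finset.sum_le_sum fun q _ =>
      Finset.sum_le_sum fun r _ => step3 q r) ?_
    have : (∑ q : Fin da × Fin d, ∑ r : Fin (k - 1) → Fin d,
        ((permCount (sortTuple (cons0 q.2 r)) : ℝ))⁻¹ *
          ∑ p, ‖Z p (q.1, sortTuple (cons0 q.2 r))‖ ^ 2) =
        ∑ a' : Fin da, ∑ j : Jk d k, ∑ p, ‖Z p (a', j)‖ ^ 2 := by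
      rw [Fintype.sum_prod_type]
      exact Finset.sum_congr rfl fun a' _ => resum hk
        (fun j => ∑ p, ‖Z p (a', j)‖ ^ 2)
    rw [this, frobSq]
    rw [show (∑ a' : Fin da, ∑ j : Jk d k, ∑ p, ‖Z p (a', j)‖ ^ 2) =
      ∑ q : Fin da × Jk d k, ∑ p, ‖Z p q‖ ^ 2 from
      (Fintype.sum_prod_type (f := fun q : Fin da × Jk d k =>
        ∑ p, ‖Z p q‖ ^ 2)).symm]
    exact le_of_eq Finset.sum_comm
  calc frobSq (Amap da d k Z) ≤ C * ∑ p, ∑ q, ∑ r, G p q r := step1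
    _ = C * ∑ q, ∑ r, ∑ p, G p q r := by rw [step2]
    _ ≤ C * frobSq Z := mul_le_mul_of_nonneg_left step4 hC0

end Aux5

noncomputable section Aux6

theorem frobSq_nonneg {α β : Type*} [Fintype α] [Fintype β] (M : Matrix α β ℂ) :
    0 ≤ frobSq M :=
  Finset.sum_nonneg fun _ _ => Finset.sum_nonneg fun _ _ => by positivity

theorem frobSq_pTransp {m α : Type*} [Fintype m] [Fintype α]
    (M : Matrix (m × α) (m × α) ℂ) : frobSq (pTransp M) = frobSq M := by
  let e : ((m × α) × (m × α)) ≃ ((m × α) × (m × α)) :=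
    ⟨fun x => ((x.1.1, x.2.2), (x.2.1, x.1.2)), fun x => ((x.1.1, x.2.2), (x.2.1, x.1.2)),
      fun x => rfl, fun x => rfl⟩
  rw [frobSq, frobSq,
    show (∑ p, ∑ q, ‖pTransp M p q‖ ^ 2) =
      ∑ x : (m × α) × (m × α), ‖pTransp M x.1 x.2‖ ^ 2 from
      (Fintype.sum_prod_type (f := fun x : (m × α) × (m × α) =>
        ‖pTransp M x.1 x.2‖ ^ 2)).symm,
    show (∑ p, ∑ q, ‖M p q‖ ^ 2) =
      ∑ x : (m × α) × (m × α), ‖M x.1 x.2‖ ^ 2 from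
      (Fintype.sum_prod_type (f := fun x : (m × α) × (m × α) =>
        ‖M x.1 x.2‖ ^ 2)).symm]
  calc (∑ x : (m × α) × (m × α), ‖pTransp M x.1 x.2‖ ^ 2)
      = ∑ x : (m × α) × (m × α), ‖M (e x).1 (e x).2‖ ^ 2 := rfl
    _ = _ := Equiv.sum_comp e (fun x : (m × α) × (m × α) => ‖M x.1 x.2‖ ^ 2)

theorem frobSq_sub_le {α β : Type*} [Fintype α] [Fintype β] (X Y : Matrix α β ℂ) :
    frobSq (X - Y) ≤ 2 * frobSq X + 2 * frobSq Y := by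
  rw [frobSq, frobSq, frobSq, Finset.mul_sum, Finset.mul_sum, ← Finset.sum_add_distrib]
  refine Finset.sum_le_sum fun p _ => ?_
  rw [Finset.mul_sum, Finset.mul_sum, ← Finset.sum_add_distrib]
  refine Finset.sum_le_sum fun q _ => ?_
  have h1 : ‖(X - Y) p q‖ ≤ ‖X p q‖ + ‖Y p q‖ := by
    rw [Matrix.sub_apply]
    exact norm_sub_le _ _
  nlinarith [norm_nonneg ((X - Y) p q), norm_nonneg (X p q),
    norm_nonneg (Y p q), sq_nonneg (‖X p q‖ - ‖Y p q‖)]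

end Aux6

theorem stmt11 (da d k : ℕ) (hda : 0 < da) (hd : 0 < d) (hk : 0 < k)
    (Z W' : Matrix (Fin da × Jk d k) (Fin da × Jk d k) ℂ)
    (hZ : Z.IsHermitian) (hW' : W'.IsHermitian) :
    frobSq (Amap da d k Z) + frobSq (pTransp Z - W') ≤
      (((Nat.choose (d + k - 1) k : ℝ) + 2 * d) / d) * (frobSq Z + frobSq W') := by
  have h1 := frobSq_Amap_le hk hd Z
  have h2 : frobSq (pTransp Z - W') ≤ 2 * frobSq Z + 2 * frobSq W' := by
    have := frobSq_sub_le (pTransp Z) W'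
    rwa [frobSq_pTransp] at this
  have hz := frobSq_nonneg Z
  have hw := frobSq_nonneg W'
  have hd0 : (0 : ℝ) < d := Nat.cast_pos.mpr hd
  have hc : (0 : ℝ) ≤ (Nat.choose (d + k - 1) k : ℝ) / d := by positivity
  have hexp : (((Nat.choose (d + k - 1) k : ℝ) + 2 * d) / d) =
      (Nat.choose (d + k - 1) k : ℝ) / d + 2 := by
    field_simp
  rw [hexp]
  nlinarith
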